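/- Let n ≥ 2 be an integer and p ∈ (0, 1/n]; set q = (n-1)·p and r = 1 - n·p. Let h : ℕ → ℝ satisfy h(1) = 1, h(2) = q + r, and h(m) = r·h(m-1) + q·h(m-2) for all m ≥ 3. Then 0 ≤ h(m) ≤ 1 for all m ≥ 1, and h is nonincreasing: h(m+1) ≤ h(m) for all m ≥ 1. -/

import Mathlib

lemma rec_nonneg (q r : ℝ) (hq : 0 ≤ q) (hr : 0 ≤ r) (f : ℕ → ℝ)
    (h1 : 0 ≤ f 1) (h2 : 0 ≤ f 2)
    (hrec : ∀ m : ℕ, 3 ≤ m → f m = r * f (m - 1) + q * f (m - 2)) :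
    ∀ m : ℕ, 1 ≤ m → 0 ≤ f m := by
  intro m
  induction m using Nat.strong_induction_on with
  | _ m ih =>
    intro hm
    match m, hm with
    | 1, _ => exact h1
    | 2, _ => exact h2
    | (k+3), _ =>
      rw [hrec (k+3) (by omega)]
      have a := ih (k+2) (by omega) (by omega)
      have b := ih (k+1) (by omega) (by omega)
      have e1 : k+3-1 = k+2 := rfl
      have e2 : k+3-2 = k+1 := rfl
      rw [e1, e2]
      positivity

/-- The success probability h(m) is a probability and is nonincreasing in the
attack duration m. -/
theorem stmt_15 (n : ℕ) (hn : 2 ≤ n) (p : ℝ) (hp : p ∈ Set.Ioc (0 : ℝ) (1 / (n : ℝ)))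
    (q r : ℝ) (hq : q = ((n : ℝ) - 1) * p) (hr : r = 1 - (n : ℝ) * p)
    (h : ℕ → ℝ) (h1 : h 1 = 1) (h2 : h 2 = q + r)
    (hrec : ∀ m : ℕ, 3 ≤ m → h m = r * h (m - 1) + q * h (m - 2)) :
    (∀ m : ℕ, 1 ≤ m → 0 ≤ h m ∧ h m ≤ 1) ∧
      ∀ m : ℕ, 1 ≤ m → h (m + 1) ≤ h m := by
  obtain ⟨hp0, hpn⟩ := hp
  have hn1 : (1 : ℝ) ≤ (n : ℝ) - 1 := by
    have : (2 : ℝ) ≤ (n : ℝ) := by exact_mod_cast hn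
    linarith
  have hnpos : (0 : ℝ) < (n : ℝ) := by positivity
  have hnp : (n : ℝ) * p ≤ 1 := by
    rw [le_div_iff₀ hnpos] at hpn
    linarith [mul_comm p (n : ℝ)]
  have hq0 : 0 ≤ q := by rw [hq]; nlinarith
  have hr0 : 0 ≤ r := by rw [hr]; linarith
  have hqr : q + r = 1 - p := by rw [hq, hr]; ring
  -- nonnegativity of h
  have hpos : ∀ m : ℕ, 1 ≤ m → 0 ≤ h m := by
    refine rec_nonneg q r hq0 hr0 h (by rw [h1]; norm_num) (by rw [h2]; linarith) hrec
  -- monotone: differences nonneg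
  have h3 : h 3 = r * (q + r) + q := by
    have := hrec 3 (by norm_num)
    simpa [h1, h2] using this
  have gmono : ∀ m : ℕ, 1 ≤ m → 0 ≤ h m - h (m + 1) := by
    refine rec_nonneg q r hq0 hr0 (fun m => h m - h (m + 1)) ?_ ?_ ?_
    · show 0 ≤ h 1 - h 2; rw [h1, h2]; linarith
    · show 0 ≤ h 2 - h 3; rw [h2, h3]; nlinarith
    · intro m hm
      have e1 : m - 1 + 1 = m := by omega
      have e2 : m - 2 + 1 = m - 1 := by omega
      have A := hrec m hm
      have B := hrec (m + 1) (by omega)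
      have e3 : m + 1 - 1 = m := rfl
      have e4 : m + 1 - 2 = m - 1 := by omega
      rw [e3, e4] at B
      rw [e1, e2]
      linarith [A, B]
  have hmono : ∀ m : ℕ, 1 ≤ m → h (m + 1) ≤ h m := by
    intro m hm
    have := gmono m hm
    linarith
  refine ⟨?_, hmono⟩
  intro m hm
  refine ⟨hpos m hm, ?_⟩
  -- h m ≤ 1 by induction using monotonicity
  induction m with
  | zero => omega
  | succ k ihk =>
    rcases Nat.eq_or_lt_of_le hm with hk | hk
    · rw [← hk, h1]
    · have hk1 : 1 ≤ k := by omega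
      have := hmono k hk1
      have := ihk hk1
      linarith
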